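/- arXiv:1310.5930 — 3 statements merged into one kernel-verified Lean document; each statement's English description precedes it below -/
import Mathlib

section
/- Let x_n > 0 be the distance from a point noise source to the center of a spherical receiver of radius r_obs > 0, let k > 0 be the molecule degradation rate, and set r_dif = r_obs − x_n, r_sum = r_obs + x_n, and β = sgn(r_dif). Then the asymptotic impact integral in the absence of flow satisfies ∫₀^∞ { (1/2)[erf((r_obs − x_n)/(2√τ)) + erf((r_obs + x_n)/(2√τ))] + (1/x_n)·√(τ/π)·[exp(−r_sum²/(4τ)) − exp(−r_dif²/(4τ))] } · exp(−k·τ) dτ = (1/(2k)) · [ β + 1 + (1/x_n)·exp(−r_sum·√k)·(k^{−1/2} + r_obs) − (1/x_n)·exp(−|r_dif|·√k)·(k^{−1/2} + β·r_obs) ]. -/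
open Real MeasureTheory

/-- The error function `erf a = (2/√π) ∫₀^a exp(−b²) db`. -/
noncomputable def erf (a : ℝ) : ℝ := (2 / Real.sqrt π) * ∫ b in (0:ℝ)..a, Real.exp (-b^2)

open Filter Topology Set

lemma gauss_cont : Continuous fun b : ℝ => Real.exp (-b^2) := by
  continuity

lemma gauss_integrable : MeasureTheory.Integrable fun b : ℝ => Real.exp (-b^2) := by
  have := integrable_exp_neg_mul_sq (b := 1) one_pos
  simpa using this

lemma erf_hasDerivAt (a : ℝ) : HasDerivAt erf (2 / Real.sqrt π * Real.exp (-a^2)) a := by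
  have h : HasDerivAt (fun u => ∫ b in (0:ℝ)..u, Real.exp (-b^2)) (Real.exp (-a^2)) a :=
    intervalIntegral.integral_hasDerivAt_right gauss_integrable.intervalIntegrable
      (gauss_cont.stronglyMeasurable.stronglyMeasurableAtFilter) gauss_cont.continuousAt
  exact h.const_mul (2 / Real.sqrt π)

lemma erf_continuous : Continuous erf := by
  have : Differentiable ℝ erf := fun a => (erf_hasDerivAt a).differentiableAt
  exact this.continuous

lemma erf_zero : erf 0 = 0 := by simp [erf]

lemma erf_neg (a : ℝ) : erf (-a) = - erf a := by
  have h := intervalIntegral.integral_comp_neg (a := 0) (b := a) (fun b => Real.exp (-b^2))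
  simp only [neg_zero, neg_neg, neg_sq] at h
  have h2 : ∫ b in (0:ℝ)..(-a), Real.exp (-b^2) = - ∫ b in (0:ℝ)..a, Real.exp (-b^2) := by
    rw [h, intervalIntegral.integral_symm]
  simp [erf, h2]

lemma erf_tendsto_atTop : Tendsto erf atTop (𝓝 1) := by
  have h0 : ∫ b in Ioi (0:ℝ), Real.exp (-b^2) = Real.sqrt π / 2 := by
    have := integral_gaussian_Ioi 1
    simpa using this
  have h : Tendsto (fun u : ℝ => ∫ b in (0:ℝ)..u, Real.exp (-b^2)) atTop
      (𝓝 (Real.sqrt π / 2)) := by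
    rw [← h0]
    exact intervalIntegral_tendsto_integral_Ioi 0 gauss_integrable.integrableOn tendsto_id
  have := h.const_mul (2 / Real.sqrt π)
  have hπ : Real.sqrt π ≠ 0 := by positivity
  have h1 : 2 / Real.sqrt π * (Real.sqrt π / 2) = 1 := by field_simp
  rw [h1] at this
  exact this.congr fun u => by simp [erf]

lemma erf_tendsto_atBot : Tendsto erf atBot (𝓝 (-1)) := by
  have h := erf_tendsto_atTop.comp tendsto_neg_atBot_atTop
  have : (fun a : ℝ => erf (-a)) = fun a => - erf a := funext erf_neg
  rw [Function.comp_def] at h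
  rw [this] at h
  have := h.neg
  simpa using this

lemma erf_nonneg_of_nonneg {a : ℝ} (ha : 0 ≤ a) : 0 ≤ erf a := by
  have : 0 ≤ ∫ b in (0:ℝ)..a, Real.exp (-b^2) :=
    intervalIntegral.integral_nonneg ha (fun b _ => (Real.exp_pos _).le)
  have hπ : 0 ≤ 2 / Real.sqrt π := by positivity
  exact mul_nonneg hπ this

lemma erf_le_one (a : ℝ) : erf a ≤ 1 := by
  rcases le_or_gt a 0 with h | h
  · calc erf a = - erf (-a) := by rw [← erf_neg, neg_neg]
      _ ≤ 0 := by simpa using erf_nonneg_of_nonneg (by linarith)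
      _ ≤ 1 := by norm_num
  · have key : ∫ b in (0:ℝ)..a, Real.exp (-b^2) ≤ Real.sqrt π / 2 := by
      rw [intervalIntegral.integral_of_le h.le]
      have h0 : ∫ b in Ioi (0:ℝ), Real.exp (-b^2) = Real.sqrt π / 2 := by
        simpa using integral_gaussian_Ioi 1
      rw [← h0]
      apply setIntegral_mono_set gauss_integrable.integrableOn
      · exact Eventually.of_forall fun b => (Real.exp_pos _).le
      · exact HasSubset.Subset.eventuallyLE Ioc_subset_Ioi_self
    have hπ : (0:ℝ) < Real.sqrt π := Real.sqrt_pos.2 Real.pi_pos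
    calc erf a ≤ (2 / Real.sqrt π) * (Real.sqrt π / 2) := by
          apply mul_le_mul_of_nonneg_left key (by positivity)
      _ = 1 := by field_simp
  
lemma abs_erf_le_one (a : ℝ) : |erf a| ≤ 1 := by
  rcases le_or_gt 0 a with h | h
  · rw [abs_of_nonneg (erf_nonneg_of_nonneg h)]; exact erf_le_one a
  · have : erf a = - erf (-a) := by rw [← erf_neg, neg_neg]
    rw [this, abs_neg, abs_of_nonneg (erf_nonneg_of_nonneg (by linarith))]
    exact erf_le_one _

noncomputable def Aab (k a t : ℝ) : ℝ :=
  -(1/k) * (Real.exp (-(k*t)) * erf (a/(2*Real.sqrt t)))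
  + (1/(2*k)) * (Real.exp (a*Real.sqrt k) * erf (a/(2*Real.sqrt t) + Real.sqrt k * Real.sqrt t)
      + Real.exp (-(a*Real.sqrt k)) * erf (a/(2*Real.sqrt t) - Real.sqrt k * Real.sqrt t))

noncomputable def Bab (k a t : ℝ) : ℝ :=
  -(1/k) * (Real.sqrt t / Real.sqrt π * (Real.exp (-(a^2)/(4*t)) * Real.exp (-(k*t))))
  + (1/(4*k)) * (((Real.sqrt k)⁻¹ - a) * Real.exp (a*Real.sqrt k)
        * erf (a/(2*Real.sqrt t) + Real.sqrt k * Real.sqrt t)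
      - ((Real.sqrt k)⁻¹ + a) * Real.exp (-(a*Real.sqrt k))
        * erf (a/(2*Real.sqrt t) - Real.sqrt k * Real.sqrt t))

section deriv
variable {k a t : ℝ}

lemma hasDerivAt_w (ht : 0 < t) :
    HasDerivAt (fun u => a/(2*Real.sqrt u)) (-(a/(4*t*Real.sqrt t))) t := by
  have hst : (0:ℝ) < Real.sqrt t := Real.sqrt_pos.2 ht
  have hsq : HasDerivAt Real.sqrt (1/(2*Real.sqrt t)) t := Real.hasDerivAt_sqrt ht.ne'
  have h := ((hsq.const_mul (2:ℝ)).inv (by positivity)).const_mul a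
  have hfun : (fun u => a * (2 * Real.sqrt u)⁻¹) = fun u => a/(2*Real.sqrt u) := by
    funext u; rw [div_eq_mul_inv]
  simp only [Pi.inv_apply] at h
  rw [hfun] at h
  refine h.congr_deriv ?_
  have h2 : Real.sqrt t ^ 2 = t := Real.sq_sqrt ht.le
  rw [mul_pow, h2]
  field_simp
  ring

lemma hasDerivAt_v (hk : 0 < k) (ht : 0 < t) :
    HasDerivAt (fun u => Real.sqrt k * Real.sqrt u) (Real.sqrt k/(2*Real.sqrt t)) t := by
  have hsq : HasDerivAt Real.sqrt (1/(2*Real.sqrt t)) t := Real.hasDerivAt_sqrt ht.ne'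
  have := hsq.const_mul (Real.sqrt k)
  exact this.congr_deriv (by ring)

lemma hasDerivAt_expk (k t : ℝ) :
    HasDerivAt (fun u => Real.exp (-(k*u))) (-k * Real.exp (-(k*t))) t := by
  have h : HasDerivAt (fun u : ℝ => -(k*u)) (-k) t := by
    exact (((hasDerivAt_id t).const_mul k).neg).congr_deriv (by simp)
  simpa [mul_comm] using h.exp

lemma hasDerivAt_Aab (hk : 0 < k) (ht : 0 < t) :
    HasDerivAt (Aab k a) (erf (a/(2*Real.sqrt t)) * Real.exp (-(k*t))) t := by
  have hst : (0:ℝ) < Real.sqrt t := Real.sqrt_pos.2 ht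
  have hst2 : Real.sqrt t ^ 2 = t := Real.sq_sqrt ht.le
  have hq2 : Real.sqrt k ^ 2 = k := Real.sq_sqrt hk.le
  set q := Real.sqrt k with hq
  set w := a/(2*Real.sqrt t) with hwdef
  have hw : HasDerivAt (fun u => a/(2*Real.sqrt u)) (-(a/(4*t*Real.sqrt t))) t := hasDerivAt_w ht
  have hv : HasDerivAt (fun u => q * Real.sqrt u) (q/(2*Real.sqrt t)) t := hasDerivAt_v hk ht
  have hW : HasDerivAt (fun u => erf (a/(2*Real.sqrt u)))
      (2/Real.sqrt π * Real.exp (-(w^2)) * -(a/(4*t*Real.sqrt t))) t :=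
    (erf_hasDerivAt w).comp (h₂ := erf) t hw
  have hP : HasDerivAt (fun u => erf (a/(2*Real.sqrt u) + q * Real.sqrt u))
      (2/Real.sqrt π * Real.exp (-((w + q*Real.sqrt t)^2)) * (-(a/(4*t*Real.sqrt t)) + q/(2*Real.sqrt t))) t :=
    (erf_hasDerivAt (w + q*Real.sqrt t)).comp (h₂ := erf) t (hw.add hv)
  have hM : HasDerivAt (fun u => erf (a/(2*Real.sqrt u) - q * Real.sqrt u))
      (2/Real.sqrt π * Real.exp (-((w - q*Real.sqrt t)^2)) * (-(a/(4*t*Real.sqrt t)) - q/(2*Real.sqrt t))) t :=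
    (erf_hasDerivAt (w - q*Real.sqrt t)).comp (h₂ := erf) t (hw.sub hv)
  have h1 := (hasDerivAt_expk k t).mul hW
  have H := ((h1.const_mul (-(1/k))).add
    (((hP.const_mul (Real.exp (a*q))).add (hM.const_mul (Real.exp (-(a*q))))).const_mul (1/(2*k))))
  refine H.congr_deriv ?_
  have hkt : k*t = q^2 * Real.sqrt t^2 := by rw [hq2, hst2]
  have key : ∀ (A Q S : ℝ), S ≠ 0 → A*Q + -((A/(2*S) + Q*S)^2) = -((A/(2*S))^2) + -(Q^2*S^2) :=
    fun A Q S hS => by field_simp; ring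
  have hE1 : Real.exp (-((w + q*Real.sqrt t)^2))
      = Real.exp (-(a*q)) * (Real.exp (-(w^2)) * Real.exp (-(k*t))) := by
    rw [← Real.exp_add, ← Real.exp_add]
    congr 1
    rw [hwdef, hkt]
    linear_combination key a q (Real.sqrt t) hst.ne'
  have hE2 : Real.exp (-((w - q*Real.sqrt t)^2))
      = Real.exp (a*q) * (Real.exp (-(w^2)) * Real.exp (-(k*t))) := by
    rw [← Real.exp_add, ← Real.exp_add]
    congr 1
    rw [hwdef, hkt]
    linear_combination key a (-q) (Real.sqrt t) hst.ne'
  rw [hE1, hE2]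
  simp only [Real.exp_neg]
  have hX : Real.exp (a*q) ≠ 0 := Real.exp_ne_zero _
  have hπ : Real.sqrt π ≠ 0 := by positivity
  have ht' : t ≠ 0 := ht.ne'
  have hk' : k ≠ 0 := hk.ne'
  have hst' : Real.sqrt t ≠ 0 := hst.ne'
  field_simp
  ring
end deriv

lemma hasDerivAt_Bab (hk : 0 < k) (ht : 0 < t) :
    HasDerivAt (Bab k a)
      (Real.sqrt t / Real.sqrt π * Real.exp (-(a^2)/(4*t)) * Real.exp (-(k*t))) t := by
  have hst : (0:ℝ) < Real.sqrt t := Real.sqrt_pos.2 ht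
  have hst2 : Real.sqrt t ^ 2 = t := Real.sq_sqrt ht.le
  have hq2 : Real.sqrt k ^ 2 = k := Real.sq_sqrt hk.le
  set q := Real.sqrt k with hq
  set w := a/(2*Real.sqrt t) with hwdef
  have hw : HasDerivAt (fun u => a/(2*Real.sqrt u)) (-(a/(4*t*Real.sqrt t))) t := hasDerivAt_w ht
  have hv : HasDerivAt (fun u => q * Real.sqrt u) (q/(2*Real.sqrt t)) t := hasDerivAt_v hk ht
  have hP : HasDerivAt (fun u => erf (a/(2*Real.sqrt u) + q * Real.sqrt u))
      (2/Real.sqrt π * Real.exp (-((w + q*Real.sqrt t)^2)) * (-(a/(4*t*Real.sqrt t)) + q/(2*Real.sqrt t))) t :=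
    (erf_hasDerivAt (w + q*Real.sqrt t)).comp (h₂ := erf) t (hw.add hv)
  have hM : HasDerivAt (fun u => erf (a/(2*Real.sqrt u) - q * Real.sqrt u))
      (2/Real.sqrt π * Real.exp (-((w - q*Real.sqrt t)^2)) * (-(a/(4*t*Real.sqrt t)) - q/(2*Real.sqrt t))) t :=
    (erf_hasDerivAt (w - q*Real.sqrt t)).comp (h₂ := erf) t (hw.sub hv)
  have hS : HasDerivAt (fun u => Real.sqrt u / Real.sqrt π) (1/(2*Real.sqrt t)/Real.sqrt π) t :=
    (Real.hasDerivAt_sqrt ht.ne').div_const _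
  have hEa : HasDerivAt (fun u => Real.exp (-(a^2)/(4*u)))
      (Real.exp (-(a^2)/(4*t)) * (a^2/(4*t^2))) t := by
    have hinner : HasDerivAt (fun u : ℝ => -(a^2)/(4*u)) (a^2/(4*t^2)) t := by
      have h0 : HasDerivAt (fun u : ℝ => u⁻¹) (-(t^2)⁻¹) t := hasDerivAt_inv ht.ne'
      have h1 := h0.const_mul (-(a^2)/4)
      have hfun : (fun u : ℝ => -(a^2)/4 * u⁻¹) = fun u => -(a^2)/(4*u) := by
        funext u; field_simp
      rw [hfun] at h1
      refine h1.congr_deriv ?_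
      field_simp
    exact hinner.exp
  have h1 := hS.mul (hEa.mul (hasDerivAt_expk k t))
  have H := ((h1.const_mul (-(1/k))).add
    ((((hP.const_mul (((q)⁻¹ - a) * Real.exp (a*q))).sub
        (hM.const_mul (((q)⁻¹ + a) * Real.exp (-(a*q))))).const_mul (1/(4*k)))))
  have hB : Bab k a = fun u => -(1/k) * (Real.sqrt u / Real.sqrt π * (Real.exp (-(a^2)/(4*u)) * Real.exp (-(k*u))))
      + (1/(4*k)) * ((q⁻¹ - a) * Real.exp (a*q) * erf (a/(2*Real.sqrt u) + q * Real.sqrt u)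
        - (q⁻¹ + a) * Real.exp (-(a*q)) * erf (a/(2*Real.sqrt u) - q * Real.sqrt u)) := rfl
  rw [hB]
  refine H.congr_deriv ?_
  have hkt : k*t = q^2 * Real.sqrt t^2 := by rw [hq2, hst2]
  have key : ∀ (A Q S : ℝ), S ≠ 0 → A*Q + -((A/(2*S) + Q*S)^2) = -((A/(2*S))^2) + -(Q^2*S^2) :=
    fun A Q S hS => by field_simp; ring
  have hE1 : Real.exp (-((w + q*Real.sqrt t)^2))
      = Real.exp (-(a*q)) * (Real.exp (-(w^2)) * Real.exp (-(k*t))) := by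
    rw [← Real.exp_add, ← Real.exp_add]
    congr 1
    rw [hwdef, hkt]
    linear_combination key a q (Real.sqrt t) hst.ne'
  have hE2 : Real.exp (-((w - q*Real.sqrt t)^2))
      = Real.exp (a*q) * (Real.exp (-(w^2)) * Real.exp (-(k*t))) := by
    rw [← Real.exp_add, ← Real.exp_add]
    congr 1
    rw [hwdef, hkt]
    linear_combination key a (-q) (Real.sqrt t) hst.ne'
  have hEw : Real.exp (-(w^2)) = Real.exp (-(a^2)/(4*t)) := by
    congr 1
    have h4 : (a/(2*Real.sqrt t))^2 = a^2/(4*t) := by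
      rw [div_pow, mul_pow, hst2]; norm_num
    rw [hwdef, h4, neg_div]
  rw [hE1, hE2, hEw]
  simp only [Real.exp_neg, Pi.mul_apply]
  have hX : Real.exp (a*q) ≠ 0 := Real.exp_ne_zero _
  have hπ : Real.sqrt π ≠ 0 := by positivity
  have ht' : t ≠ 0 := ht.ne'
  have hk' : k ≠ 0 := hk.ne'
  have hst' : Real.sqrt t ≠ 0 := hst.ne'
  have hq' : q ≠ 0 := by rw [hq]; positivity
  obtain ⟨sv, hspos, rfl⟩ : ∃ s : ℝ, 0 < s ∧ s^2 = t := ⟨Real.sqrt t, hst, hst2⟩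
  simp only [Real.sqrt_sq hspos.le]
  have hs' : sv ≠ 0 := hspos.ne'
  field_simp
  ring

section limits
variable {k a : ℝ}

lemma sqrt_tendsto_atTop : Tendsto Real.sqrt atTop atTop := by
  apply tendsto_atTop_atTop_of_monotone (fun x y h => Real.sqrt_le_sqrt h)
  intro b
  exact ⟨(max b 0)^2, by rw [Real.sqrt_sq (le_max_right b 0)]; exact le_max_left b 0⟩

lemma w_tendsto_top (a : ℝ) : Tendsto (fun t => a/(2*Real.sqrt t)) atTop (𝓝 0) := by
  have h : Tendsto (fun t : ℝ => (Real.sqrt t)⁻¹) atTop (𝓝 0) :=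
    sqrt_tendsto_atTop.inv_tendsto_atTop
  have h2 := h.const_mul (a/2)
  simp only [mul_zero] at h2
  exact h2.congr fun t => by ring

lemma v_tendsto_top (hk : 0 < k) : Tendsto (fun t => Real.sqrt k * Real.sqrt t) atTop atTop :=
  sqrt_tendsto_atTop.const_mul_atTop (Real.sqrt_pos.2 hk)

lemma expk_tendsto_top (hk : 0 < k) : Tendsto (fun t => Real.exp (-(k*t))) atTop (𝓝 0) := by
  have h : Tendsto (fun t : ℝ => k*t) atTop atTop := tendsto_id.const_mul_atTop hk
  exact (Real.tendsto_exp_neg_atTop_nhds_zero).comp h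

lemma sqrt_mul_expk_tendsto_top (hk : 0 < k) :
    Tendsto (fun t => Real.sqrt t * Real.exp (-(k*t))) atTop (𝓝 0) := by
  have h2k : (0:ℝ) < 2*k := by positivity
  have h0 : Tendsto (fun t : ℝ => ((2*k)*t)^(1:ℕ) * Real.exp (-((2*k)*t))) atTop (𝓝 0) :=
    (tendsto_pow_mul_exp_neg_atTop_nhds_zero 1).comp (tendsto_id.const_mul_atTop h2k)
  have h1 : Tendsto (fun t : ℝ => t * Real.exp (-(2*k*t))) atTop (𝓝 0) := by
    have h2 := h0.const_mul (1/(2*k))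
    simp only [mul_zero] at h2
    exact h2.congr fun t => by field_simp
  have h3 : Tendsto (fun t : ℝ => Real.sqrt (t * Real.exp (-(2*k*t)))) atTop (𝓝 0) := by
    have := (Real.continuous_sqrt.tendsto 0).comp h1
    simpa [Function.comp_def] using this
  apply h3.congr'
  filter_upwards [eventually_ge_atTop (0:ℝ)] with t ht
  have he : Real.exp (-(2*k*t)) = Real.exp (-(k*t)) * Real.exp (-(k*t)) := by
    rw [← Real.exp_add]; ring_nf
  rw [he, Real.sqrt_mul ht, Real.sqrt_mul_self (Real.exp_nonneg _)]

lemma expk_mul_erf_tendsto_top (hk : 0 < k) (f : ℝ → ℝ) :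
    Tendsto (fun t => Real.exp (-(k*t)) * erf (f t)) atTop (𝓝 0) := by
  apply squeeze_zero_norm _ (expk_tendsto_top hk)
  intro t
  rw [norm_mul, Real.norm_eq_abs, Real.norm_eq_abs, Real.abs_exp]
  exact mul_le_of_le_one_right (Real.exp_nonneg _) (abs_erf_le_one _)

lemma tendsto_Aab_top (hk : 0 < k) (a : ℝ) : Tendsto (Aab k a) atTop
    (𝓝 ((1/(2*k)) * (Real.exp (a*Real.sqrt k) - Real.exp (-(a*Real.sqrt k))))) := by
  have h1 := (expk_mul_erf_tendsto_top hk (fun t => a/(2*Real.sqrt t))).const_mul (-(1/k))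
  have h2 : Tendsto (fun t => erf (a/(2*Real.sqrt t) + Real.sqrt k * Real.sqrt t)) atTop (𝓝 1) :=
    erf_tendsto_atTop.comp ((w_tendsto_top a).add_atTop (v_tendsto_top hk))
  have h3 : Tendsto (fun t => erf (a/(2*Real.sqrt t) - Real.sqrt k * Real.sqrt t)) atTop (𝓝 (-1)) := by
    apply erf_tendsto_atBot.comp
    have hv' := tendsto_neg_atTop_atBot.comp (v_tendsto_top hk)
    have := (w_tendsto_top a).add_atBot hv'
    apply this.congr fun t => by simp [Function.comp, sub_eq_add_neg]
  have H := (h1.add (((h2.const_mul (Real.exp (a*Real.sqrt k))).add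
    (h3.const_mul (Real.exp (-(a*Real.sqrt k))))).const_mul (1/(2*k))))
  convert H using 1
  · rfl
  · ring

lemma tendsto_Bab_top (hk : 0 < k) (a : ℝ) : Tendsto (Bab k a) atTop
    (𝓝 ((1/(4*k)) * (((Real.sqrt k)⁻¹ - a) * Real.exp (a*Real.sqrt k)
        + ((Real.sqrt k)⁻¹ + a) * Real.exp (-(a*Real.sqrt k))))) := by
  have h1 : Tendsto (fun t => Real.sqrt t / Real.sqrt π
      * (Real.exp (-(a^2)/(4*t)) * Real.exp (-(k*t)))) atTop (𝓝 0) := by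
    apply squeeze_zero_norm' _ (sqrt_mul_expk_tendsto_top hk)
    filter_upwards [eventually_gt_atTop (0:ℝ)] with t ht
    have hπ1 : (1:ℝ) ≤ Real.sqrt π := by
      rw [show (1:ℝ) = Real.sqrt 1 by simp]
      exact Real.sqrt_le_sqrt (by linarith [Real.pi_gt_three])
    have hE1 : Real.exp (-(a^2)/(4*t)) ≤ 1 := by
      exact Real.exp_le_one_iff.2 (div_nonpos_of_nonpos_of_nonneg (neg_nonpos.2 (sq_nonneg a)) (by positivity))
    have hnn : (0:ℝ) ≤ Real.sqrt t / Real.sqrt π * (Real.exp (-(a^2)/(4*t)) * Real.exp (-(k*t))) := by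
      positivity
    rw [Real.norm_eq_abs, abs_of_nonneg hnn]
    calc Real.sqrt t / Real.sqrt π * (Real.exp (-(a^2)/(4*t)) * Real.exp (-(k*t)))
        ≤ Real.sqrt t * (1 * Real.exp (-(k*t))) := by
          apply mul_le_mul (div_le_self (Real.sqrt_nonneg t) hπ1)
            (mul_le_mul_of_nonneg_right hE1 (Real.exp_nonneg _)) (by positivity) (Real.sqrt_nonneg t)
      _ = Real.sqrt t * Real.exp (-(k*t)) := by ring
  have h2 : Tendsto (fun t => erf (a/(2*Real.sqrt t) + Real.sqrt k * Real.sqrt t)) atTop (𝓝 1) :=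
    erf_tendsto_atTop.comp ((w_tendsto_top a).add_atTop (v_tendsto_top hk))
  have h3 : Tendsto (fun t => erf (a/(2*Real.sqrt t) - Real.sqrt k * Real.sqrt t)) atTop (𝓝 (-1)) := by
    apply erf_tendsto_atBot.comp
    have hv' := tendsto_neg_atTop_atBot.comp (v_tendsto_top hk)
    have := (w_tendsto_top a).add_atBot hv'
    apply this.congr fun t => by simp [Function.comp, sub_eq_add_neg]
  have H := ((h1.const_mul (-(1/k))).add
    (((h2.const_mul (((Real.sqrt k)⁻¹ - a) * Real.exp (a*Real.sqrt k))).sub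
      (h3.const_mul (((Real.sqrt k)⁻¹ + a) * Real.exp (-(a*Real.sqrt k))))).const_mul (1/(4*k))))
  convert H using 1
  · rfl
  · ring
end limits

section zerolimits
variable {k a : ℝ}

lemma sqrt_tendsto_zero : Tendsto Real.sqrt (𝓝[>](0:ℝ)) (𝓝[>] (0:ℝ)) := by
  rw [tendsto_nhdsWithin_iff]
  constructor
  · have := (Real.continuous_sqrt.tendsto 0).mono_left (nhdsWithin_le_nhds (s := Set.Ioi (0:ℝ)))
    simpa using this
  · filter_upwards [self_mem_nhdsWithin] with t ht
    exact Real.sqrt_pos.2 ht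

lemma inv_sqrt_tendsto_zero : Tendsto (fun t : ℝ => (Real.sqrt t)⁻¹) (𝓝[>](0:ℝ)) atTop :=
  tendsto_inv_nhdsGT_zero.comp sqrt_tendsto_zero

lemma w_tendsto_zero_pos (ha : 0 < a) : Tendsto (fun t => a/(2*Real.sqrt t)) (𝓝[>](0:ℝ)) atTop := by
  have h := inv_sqrt_tendsto_zero.const_mul_atTop (show (0:ℝ) < a/2 by positivity)
  exact h.congr fun t => by ring

lemma w_tendsto_zero_neg (ha : a < 0) : Tendsto (fun t => a/(2*Real.sqrt t)) (𝓝[>](0:ℝ)) atBot := by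
  have h := tendsto_neg_atTop_atBot.comp (w_tendsto_zero_pos (neg_pos.2 ha))
  exact h.congr fun t => by simp [Function.comp]; ring

lemma v_tendsto_zero (k : ℝ) : Tendsto (fun t : ℝ => Real.sqrt k * Real.sqrt t) (𝓝[>](0:ℝ)) (𝓝 0) := by
  have := ((Real.continuous_sqrt.tendsto 0).mono_left (nhdsWithin_le_nhds (s := Set.Ioi (0:ℝ)))).const_mul (Real.sqrt k)
  simpa using this

lemma expk_tendsto_zero (k : ℝ) : Tendsto (fun t : ℝ => Real.exp (-(k*t))) (𝓝[>](0:ℝ)) (𝓝 1) := by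
  have hc : Continuous fun t : ℝ => Real.exp (-(k*t)) := by continuity
  have := (hc.tendsto 0).mono_left (nhdsWithin_le_nhds (s := Set.Ioi (0:ℝ)))
  simpa using this

lemma erfP_tendsto_zero (ha : 0 < a) (k : ℝ) :
    Tendsto (fun t => erf (a/(2*Real.sqrt t) + Real.sqrt k * Real.sqrt t)) (𝓝[>](0:ℝ)) (𝓝 1) :=
  erf_tendsto_atTop.comp ((w_tendsto_zero_pos ha).atTop_add (v_tendsto_zero k))

lemma erfM_tendsto_zero (ha : 0 < a) (k : ℝ) :
    Tendsto (fun t => erf (a/(2*Real.sqrt t) - Real.sqrt k * Real.sqrt t)) (𝓝[>](0:ℝ)) (𝓝 1) := by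
  apply erf_tendsto_atTop.comp
  have := (w_tendsto_zero_pos ha).atTop_add ((v_tendsto_zero k).neg)
  exact this.congr fun t => by ring_nf

lemma erfP_tendsto_zero_neg (ha : a < 0) (k : ℝ) :
    Tendsto (fun t => erf (a/(2*Real.sqrt t) + Real.sqrt k * Real.sqrt t)) (𝓝[>](0:ℝ)) (𝓝 (-1)) :=
  erf_tendsto_atBot.comp ((w_tendsto_zero_neg ha).atBot_add (v_tendsto_zero k))

lemma erfM_tendsto_zero_neg (ha : a < 0) (k : ℝ) :
    Tendsto (fun t => erf (a/(2*Real.sqrt t) - Real.sqrt k * Real.sqrt t)) (𝓝[>](0:ℝ)) (𝓝 (-1)) := by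
  apply erf_tendsto_atBot.comp
  have := (w_tendsto_zero_neg ha).atBot_add ((v_tendsto_zero k).neg)
  exact this.congr fun t => by ring_nf

lemma erfW_tendsto_zero_expk (hk : 0 < k) (ha : 0 < a) :
    Tendsto (fun t => Real.exp (-(k*t)) * erf (a/(2*Real.sqrt t))) (𝓝[>](0:ℝ)) (𝓝 1) := by
  have h := (expk_tendsto_zero k).mul (erf_tendsto_atTop.comp (w_tendsto_zero_pos ha))
  simpa using h

lemma erfW_tendsto_zero_expk_neg (hk : 0 < k) (ha : a < 0) :
    Tendsto (fun t => Real.exp (-(k*t)) * erf (a/(2*Real.sqrt t))) (𝓝[>](0:ℝ)) (𝓝 (-1)) := by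
  have h := (expk_tendsto_zero k).mul (erf_tendsto_atBot.comp (w_tendsto_zero_neg ha))
  simpa using h

lemma sqrtterm_tendsto_zero (hk : 0 < k) (a : ℝ) :
    Tendsto (fun t => Real.sqrt t / Real.sqrt π
      * (Real.exp (-(a^2)/(4*t)) * Real.exp (-(k*t)))) (𝓝[>](0:ℝ)) (𝓝 0) := by
  have hs0 : Tendsto (fun t : ℝ => Real.sqrt t) (𝓝[>](0:ℝ)) (𝓝 0) := by
    have := (Real.continuous_sqrt.tendsto 0).mono_left (nhdsWithin_le_nhds (s := Set.Ioi (0:ℝ)))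
    simpa using this
  apply squeeze_zero_norm' _ hs0
  filter_upwards [self_mem_nhdsWithin] with t (ht : (0:ℝ) < t)
  have hπ1 : (1:ℝ) ≤ Real.sqrt π := by
    rw [show (1:ℝ) = Real.sqrt 1 by simp]
    exact Real.sqrt_le_sqrt (by linarith [Real.pi_gt_three])
  have hE1 : Real.exp (-(a^2)/(4*t)) ≤ 1 :=
    Real.exp_le_one_iff.2 (div_nonpos_of_nonpos_of_nonneg (neg_nonpos.2 (sq_nonneg a)) (by positivity))
  have hK1 : Real.exp (-(k*t)) ≤ 1 :=
    Real.exp_le_one_iff.2 (by nlinarith)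
  have hnn : (0:ℝ) ≤ Real.sqrt t / Real.sqrt π * (Real.exp (-(a^2)/(4*t)) * Real.exp (-(k*t))) := by
    positivity
  rw [Real.norm_eq_abs, abs_of_nonneg hnn]
  calc Real.sqrt t / Real.sqrt π * (Real.exp (-(a^2)/(4*t)) * Real.exp (-(k*t)))
      ≤ Real.sqrt t * (1 * 1) := by
        apply mul_le_mul (div_le_self (Real.sqrt_nonneg t) hπ1)
          (mul_le_mul hE1 hK1 (Real.exp_nonneg _) (by norm_num)) (by positivity) (Real.sqrt_nonneg t)
    _ = Real.sqrt t := by ring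

lemma tendsto_Aab_zero (hk : 0 < k) (a : ℝ) : Tendsto (Aab k a) (𝓝[>](0:ℝ))
    (𝓝 (Real.sign a * (-(1/k) + (1/(2*k)) * (Real.exp (a*Real.sqrt k) + Real.exp (-(a*Real.sqrt k)))))) := by
  rcases lt_trichotomy a 0 with ha | ha | ha
  · have H := (((erfW_tendsto_zero_expk_neg hk ha).const_mul (-(1/k))).add
      ((((erfP_tendsto_zero_neg ha k).const_mul (Real.exp (a*Real.sqrt k))).add
        ((erfM_tendsto_zero_neg ha k).const_mul (Real.exp (-(a*Real.sqrt k))))).const_mul (1/(2*k))))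
    convert H using 1
    · rfl
    rw [Real.sign_of_neg ha]; ring
  · subst ha
    have hfun : ∀ t : ℝ, Aab k 0 t = 0 := by
      intro t
      simp [Aab, erf_zero, zero_sub, erf_neg, Real.exp_zero]
    rw [Real.sign_zero, zero_mul]
    exact tendsto_const_nhds.congr (fun t => (hfun t).symm)
  · have H := (((erfW_tendsto_zero_expk hk ha).const_mul (-(1/k))).add
      ((((erfP_tendsto_zero ha k).const_mul (Real.exp (a*Real.sqrt k))).add
        ((erfM_tendsto_zero ha k).const_mul (Real.exp (-(a*Real.sqrt k))))).const_mul (1/(2*k))))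
    convert H using 1
    · rfl
    rw [Real.sign_of_pos ha]; ring

lemma tendsto_Bab_zero (hk : 0 < k) (a : ℝ) : Tendsto (Bab k a) (𝓝[>](0:ℝ))
    (𝓝 (Real.sign a * ((1/(4*k)) * (((Real.sqrt k)⁻¹ - a) * Real.exp (a*Real.sqrt k)
        - ((Real.sqrt k)⁻¹ + a) * Real.exp (-(a*Real.sqrt k)))))) := by
  have h1 := (sqrtterm_tendsto_zero hk a).const_mul (-(1/k))
  rcases lt_trichotomy a 0 with ha | ha | ha
  · have H := h1.add ((((erfP_tendsto_zero_neg ha k).const_mul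
        (((Real.sqrt k)⁻¹ - a) * Real.exp (a*Real.sqrt k))).sub
      ((erfM_tendsto_zero_neg ha k).const_mul
        (((Real.sqrt k)⁻¹ + a) * Real.exp (-(a*Real.sqrt k))))).const_mul (1/(4*k)))
    convert H using 1
    · rfl
    rw [Real.sign_of_neg ha]; ring
  · subst ha
    have harg : Tendsto (fun t:ℝ => (0:ℝ)/(2*Real.sqrt t) + Real.sqrt k*Real.sqrt t)
        (𝓝[>](0:ℝ)) (𝓝 0) := by simpa using v_tendsto_zero k
    have harg' : Tendsto (fun t:ℝ => (0:ℝ)/(2*Real.sqrt t) - Real.sqrt k*Real.sqrt t)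
        (𝓝[>](0:ℝ)) (𝓝 0) := by simpa using (v_tendsto_zero k).neg
    have h2 : Tendsto (fun t:ℝ => erf ((0:ℝ)/(2*Real.sqrt t) + Real.sqrt k*Real.sqrt t))
        (𝓝[>](0:ℝ)) (𝓝 0) := by
      have := (erf_continuous.tendsto 0).comp harg
      simpa [Function.comp_def, erf_zero] using this
    have h3 : Tendsto (fun t:ℝ => erf ((0:ℝ)/(2*Real.sqrt t) - Real.sqrt k*Real.sqrt t))
        (𝓝[>](0:ℝ)) (𝓝 0) := by
      have := (erf_continuous.tendsto 0).comp harg'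
      simpa [Function.comp_def, erf_zero] using this
    have H := h1.add (((h2.const_mul (((Real.sqrt k)⁻¹ - 0) * Real.exp (0*Real.sqrt k))).sub
      (h3.const_mul (((Real.sqrt k)⁻¹ + 0) * Real.exp (-(0*Real.sqrt k))))).const_mul (1/(4*k)))
    convert H using 1
    · rfl
    rw [Real.sign_zero]; ring
  · have H := h1.add ((((erfP_tendsto_zero ha k).const_mul
        (((Real.sqrt k)⁻¹ - a) * Real.exp (a*Real.sqrt k))).sub
      ((erfM_tendsto_zero ha k).const_mul
        (((Real.sqrt k)⁻¹ + a) * Real.exp (-(a*Real.sqrt k))))).const_mul (1/(4*k)))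
    convert H using 1
    · rfl
    rw [Real.sign_of_pos ha]; ring
end zerolimits

set_option maxHeartbeats 1000000 in
lemma integrand_integrable {k x : ℝ} (hk : 0 < k) (hx : 0 < x) (d s : ℝ) :
    IntegrableOn (fun τ => ((1/2) * (erf (d/(2*Real.sqrt τ)) + erf (s/(2*Real.sqrt τ)))
      + (1/x) * Real.sqrt (τ/π) * (Real.exp (-(s^2)/(4*τ)) - Real.exp (-(d^2)/(4*τ))))
      * Real.exp (-(k*τ))) (Set.Ioi (0:ℝ)) := by
  set c : ℝ := 1/(x*Real.sqrt π) with hc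
  have hπpos : (0:ℝ) < Real.sqrt π := Real.sqrt_pos.2 Real.pi_pos
  have hcpos : 0 < c := by rw [hc]; positivity
  set C : ℝ := 1 + c * (1 + 2/k) with hC
  -- dominating function
  have hdom : IntegrableOn (fun τ : ℝ => C * Real.exp (-(k/2) * τ)) (Set.Ioi 0) :=
    (exp_neg_integrableOn_Ioi 0 (by positivity : (0:ℝ) < k/2)).const_mul C
  -- continuity on Ioi 0
  have hne : ∀ τ ∈ Set.Ioi (0:ℝ), 2*Real.sqrt τ ≠ 0 := fun τ hτ => by
    have : 0 < Real.sqrt τ := Real.sqrt_pos.2 hτ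
    positivity
  have h4ne : ∀ τ ∈ Set.Ioi (0:ℝ), 4*τ ≠ 0 := fun τ hτ => by
    have : (0:ℝ) < τ := hτ
    positivity
  have herfc : ∀ a : ℝ, ContinuousOn (fun τ : ℝ => erf (a/(2*Real.sqrt τ))) (Set.Ioi 0) := fun a =>
    erf_continuous.comp_continuousOn (continuousOn_const.div
      ((continuous_const.mul Real.continuous_sqrt).continuousOn) hne)
  have hexpc : ∀ a : ℝ, ContinuousOn (fun τ : ℝ => Real.exp (-(a^2)/(4*τ))) (Set.Ioi 0) := fun a =>
    Real.continuous_exp.comp_continuousOn (continuousOn_const.div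
      ((continuous_const.mul continuous_id).continuousOn) h4ne)
  have hcont : ContinuousOn (fun τ => ((1/2) * (erf (d/(2*Real.sqrt τ)) + erf (s/(2*Real.sqrt τ)))
      + (1/x) * Real.sqrt (τ/π) * (Real.exp (-(s^2)/(4*τ)) - Real.exp (-(d^2)/(4*τ))))
      * Real.exp (-(k*τ))) (Set.Ioi 0) := by
    apply ContinuousOn.mul
    · apply ContinuousOn.add
      · exact continuousOn_const.mul ((herfc d).add (herfc s))
      · exact (continuousOn_const.mul
          ((Real.continuous_sqrt.comp (continuous_id.div_const π)).continuousOn)).mul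
          (((hexpc s)).sub (hexpc d))
    · exact (Real.continuous_exp.comp ((continuous_const.mul continuous_id).neg)).continuousOn
  apply Integrable.mono' hdom (hcont.aestronglyMeasurable measurableSet_Ioi)
  rw [ae_restrict_iff' measurableSet_Ioi]
  apply Eventually.of_forall
  intro τ ht
  have ht : (0:ℝ) < τ := ht
  have hstnn := Real.sqrt_nonneg τ
  -- elementary bounds
  have hEd0 := Real.exp_nonneg (-(d^2)/(4*τ))
  have hEs0 := Real.exp_nonneg (-(s^2)/(4*τ))
  have hEd1 : Real.exp (-(d^2)/(4*τ)) ≤ 1 :=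
    Real.exp_le_one_iff.2 (div_nonpos_of_nonpos_of_nonneg (neg_nonpos.2 (sq_nonneg d)) (by positivity))
  have hEs1 : Real.exp (-(s^2)/(4*τ)) ≤ 1 :=
    Real.exp_le_one_iff.2 (div_nonpos_of_nonpos_of_nonneg (neg_nonpos.2 (sq_nonneg s)) (by positivity))
  have habs : |Real.exp (-(s^2)/(4*τ)) - Real.exp (-(d^2)/(4*τ))| ≤ 1 :=
    abs_le.2 ⟨by linarith, by linarith⟩
  have hsqdiv : Real.sqrt (τ/π) = Real.sqrt τ / Real.sqrt π := Real.sqrt_div ht.le π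
  have hinner : |(1/2) * (erf (d/(2*Real.sqrt τ)) + erf (s/(2*Real.sqrt τ)))
      + (1/x) * Real.sqrt (τ/π) * (Real.exp (-(s^2)/(4*τ)) - Real.exp (-(d^2)/(4*τ)))|
      ≤ 1 + c * Real.sqrt τ := by
    have h1 := abs_erf_le_one (d/(2*Real.sqrt τ))
    have h2 := abs_erf_le_one (s/(2*Real.sqrt τ))
    calc _ ≤ |(1/2) * (erf (d/(2*Real.sqrt τ)) + erf (s/(2*Real.sqrt τ)))|
        + |(1/x) * Real.sqrt (τ/π) * (Real.exp (-(s^2)/(4*τ)) - Real.exp (-(d^2)/(4*τ)))| :=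
          abs_add_le _ _
      _ ≤ 1 + c * Real.sqrt τ := by
          apply add_le_add
          · rw [abs_mul]
            calc |(1:ℝ)/2| * |erf (d/(2*Real.sqrt τ)) + erf (s/(2*Real.sqrt τ))|
                ≤ (1/2) * 2 := by
                  apply mul_le_mul (le_of_eq (abs_of_nonneg (by norm_num)))
                    ((abs_add_le _ _).trans (by linarith)) (abs_nonneg _) (by norm_num)
              _ = 1 := by norm_num
          · rw [abs_mul, abs_mul, hsqdiv]
            have : |(1:ℝ)/x| = 1/x := abs_of_nonneg (by positivity)
            rw [this, abs_of_nonneg (by positivity : (0:ℝ) ≤ Real.sqrt τ / Real.sqrt π)]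
            calc 1/x * (Real.sqrt τ / Real.sqrt π) * |_| ≤ 1/x * (Real.sqrt τ / Real.sqrt π) * 1 :=
                  mul_le_mul_of_nonneg_left habs (by positivity)
              _ = c * Real.sqrt τ := by rw [hc]; field_simp
  -- exponential split
  have hsplitexp : Real.exp (-(k*τ)) = Real.exp (-(k/2)*τ) * Real.exp (-(k/2)*τ) := by
    rw [← Real.exp_add]; ring_nf
  set E := Real.exp (-(k/2)*τ) with hE
  have hEpos : 0 < E := Real.exp_pos _
  have hE1 : E ≤ 1 := Real.exp_le_one_iff.2 (by nlinarith)
  have hsE : Real.sqrt τ * E ≤ 1 + 2/k := by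
    have h1 : Real.sqrt τ ≤ 1 + τ := by
      nlinarith [Real.sq_sqrt ht.le, Real.sqrt_nonneg τ]
    have h3 : E = (Real.exp ((k/2)*τ))⁻¹ := by rw [hE, ← Real.exp_neg]; ring_nf
    rw [h3, mul_inv_le_iff₀' (Real.exp_pos _)]
    have he1 : (1:ℝ) ≤ Real.exp ((k/2)*τ) := Real.one_le_exp (by positivity)
    have he2 : (k/2)*τ + 1 ≤ Real.exp ((k/2)*τ) := Real.add_one_le_exp _
    have he3 : τ ≤ (2/k) * Real.exp ((k/2)*τ) := by
      rw [← sub_nonneg]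
      have : (2/k) * ((k/2)*τ + 1) ≤ (2/k) * Real.exp ((k/2)*τ) :=
        mul_le_mul_of_nonneg_left he2 (by positivity)
      have h4 : (2/k) * ((k/2)*τ + 1) = τ + 2/k := by field_simp
      nlinarith
    calc Real.sqrt τ ≤ 1 + τ := h1
      _ ≤ Real.exp ((k/2)*τ) + (2/k) * Real.exp ((k/2)*τ) := by linarith
      _ = Real.exp ((k/2)*τ) * (1 + 2/k) := by ring
  -- final bound
  rw [Real.norm_eq_abs, abs_mul, Real.abs_exp, hsplitexp]
  calc |(1/2) * (erf (d/(2*Real.sqrt τ)) + erf (s/(2*Real.sqrt τ)))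
      + (1/x) * Real.sqrt (τ/π) * (Real.exp (-(s^2)/(4*τ)) - Real.exp (-(d^2)/(4*τ)))| * (E * E)
      ≤ (1 + c * Real.sqrt τ) * (E * E) := by
        apply mul_le_mul_of_nonneg_right hinner (by positivity)
    _ ≤ C * E := by
        rw [hC]
        nlinarith [mul_le_mul_of_nonneg_right hsE hEpos.le, hcpos.le, hEpos.le, hE1,
          mul_nonneg hstnn hEpos.le]


set_option maxHeartbeats 1000000 in
/-- Asymptotic impact of a continuously-emitting noise source in the absence of flow,
with molecule degradation rate `k > 0` (Theorem 1 of the paper). -/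
theorem asymptotic_impact_no_flow (x_n r_obs k r_dif r_sum β : ℝ)
    (hx : 0 < x_n) (hr : 0 < r_obs) (hk : 0 < k)
    (hdif : r_dif = r_obs - x_n) (hsum : r_sum = r_obs + x_n)
    (hβ : β = Real.sign r_dif) :
    ∫ τ in Set.Ioi (0:ℝ),
      ((1/2) * (erf ((r_obs - x_n) / (2 * Real.sqrt τ))
                 + erf ((r_obs + x_n) / (2 * Real.sqrt τ)))
        + (1/x_n) * Real.sqrt (τ/π)
            * (Real.exp (-(r_sum^2) / (4*τ)) - Real.exp (-(r_dif^2) / (4*τ))))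
      * Real.exp (-(k*τ))
    = (1/(2*k)) * (β + 1
        + (1/x_n) * Real.exp (-(r_sum * Real.sqrt k)) * ((Real.sqrt k)⁻¹ + r_obs)
        - (1/x_n) * Real.exp (-(|r_dif| * Real.sqrt k)) * ((Real.sqrt k)⁻¹ + β * r_obs)) := by
  subst hβ hdif hsum
  set d : ℝ := r_obs - x_n with hd
  set s : ℝ := r_obs + x_n with hs
  set q : ℝ := Real.sqrt k with hq
  have hspos : 0 < s := by rw [hs]; linarith
  -- the antiderivative (on Ioi 0) and its limits
  set L0 : ℝ := (1/2) * (Real.sign d * (-(1/k) + (1/(2*k)) * (Real.exp (d*q) + Real.exp (-(d*q)))))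
      + (1/2) * (Real.sign s * (-(1/k) + (1/(2*k)) * (Real.exp (s*q) + Real.exp (-(s*q)))))
      + (1/x_n) * (Real.sign s * ((1/(4*k)) * ((q⁻¹ - s) * Real.exp (s*q) - (q⁻¹ + s) * Real.exp (-(s*q))))
          - Real.sign d * ((1/(4*k)) * ((q⁻¹ - d) * Real.exp (d*q) - (q⁻¹ + d) * Real.exp (-(d*q))))) with hL0
  set Mtop : ℝ := (1/2) * ((1/(2*k)) * (Real.exp (d*q) - Real.exp (-(d*q))))
      + (1/2) * ((1/(2*k)) * (Real.exp (s*q) - Real.exp (-(s*q))))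
      + (1/x_n) * ((1/(4*k)) * ((q⁻¹ - s) * Real.exp (s*q) + (q⁻¹ + s) * Real.exp (-(s*q)))
          - (1/(4*k)) * ((q⁻¹ - d) * Real.exp (d*q) + (q⁻¹ + d) * Real.exp (-(d*q)))) with hM
  set G : ℝ → ℝ := fun t => if t = 0 then L0 else
      ((1/2) * Aab k d t + (1/2) * Aab k s t) + (1/x_n) * (Bab k s t - Bab k d t) with hG
  have hG0 : G 0 = L0 := by rw [hG]; simp
  -- derivative on Ioi 0
  have hderiv : ∀ x ∈ Set.Ioi (0:ℝ), HasDerivAt G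
      (((1/2) * (erf (d / (2 * Real.sqrt x)) + erf (s / (2 * Real.sqrt x)))
        + (1/x_n) * Real.sqrt (x/π)
            * (Real.exp (-(s^2) / (4*x)) - Real.exp (-(d^2) / (4*x))))
      * Real.exp (-(k*x))) x := by
    intro x hxx
    have hx0 : (0:ℝ) < x := hxx
    have h := ((((hasDerivAt_Aab (a := d) hk hx0).const_mul ((1:ℝ)/2)).add
        ((hasDerivAt_Aab (a := s) hk hx0).const_mul ((1:ℝ)/2))).add
      (((hasDerivAt_Bab (a := s) hk hx0).sub (hasDerivAt_Bab (a := d) hk hx0)).const_mul (1/x_n)))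
    have heq : G =ᶠ[𝓝 x] fun t => ((1/2) * Aab k d t + (1/2) * Aab k s t)
        + (1/x_n) * (Bab k s t - Bab k d t) := by
      filter_upwards [eventually_ne_nhds hx0.ne'] with y hy
      rw [hG]; simp [hy]
    have h2 := h.congr_of_eventuallyEq heq
    refine h2.congr_deriv ?_
    rw [Real.sqrt_div hx0.le π]
    ring
  -- limit at infinity
  have htop : Tendsto G atTop (𝓝 Mtop) := by
    have h := (((tendsto_Aab_top hk d).const_mul ((1:ℝ)/2)).add
        ((tendsto_Aab_top hk s).const_mul ((1:ℝ)/2))).add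
      (((tendsto_Bab_top hk s).sub (tendsto_Bab_top hk d)).const_mul (1/x_n))
    apply Tendsto.congr' _ h
    filter_upwards [eventually_ne_atTop (0:ℝ)] with y hy
    rw [hG]; simp [hy]
  -- continuity within Ici 0 at 0
  have hcont : ContinuousWithinAt G (Set.Ici 0) 0 := by
    have hzero : Tendsto G (𝓝[>](0:ℝ)) (𝓝 L0) := by
      have h := (((tendsto_Aab_zero hk d).const_mul ((1:ℝ)/2)).add
          ((tendsto_Aab_zero hk s).const_mul ((1:ℝ)/2))).add
        (((tendsto_Bab_zero hk s).sub (tendsto_Bab_zero hk d)).const_mul (1/x_n))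
      apply Tendsto.congr' _ h
      filter_upwards [self_mem_nhdsWithin] with y (hy : (0:ℝ) < y)
      rw [hG]; simp [hy.ne']
    have hsplit : Set.Ici (0:ℝ) = {0} ∪ Set.Ioi 0 := by
      ext y
      simp only [Set.mem_Ici, Set.mem_union, Set.mem_singleton_iff, Set.mem_Ioi]
      constructor
      · intro h; rcases eq_or_lt_of_le h with h | h
        · exact Or.inl h.symm
        · exact Or.inr h
      · rintro (rfl | h) <;> [exact le_refl 0; exact h.le]
    show Tendsto G (𝓝[Set.Ici 0] 0) (𝓝 (G 0))
    rw [hG0, hsplit, nhdsWithin_union, nhdsWithin_singleton, tendsto_sup]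
    constructor
    · have := tendsto_pure_nhds G 0
      rwa [hG0] at this
    · exact hzero
  have key := integral_Ioi_of_hasDerivAt_of_tendsto hcont hderiv
    (integrand_integrable hk hx d s) htop
  rw [key, hG0]
  -- final algebra
  rw [hM, hL0, Real.sign_of_pos hspos]
  have hxne : x_n ≠ 0 := hx.ne'
  have hkne : k ≠ 0 := hk.ne'
  rcases lt_trichotomy d 0 with hdc | hdc | hdc
  · rw [Real.sign_of_neg hdc, abs_of_neg hdc,
      show -(-d * q) = d * q by ring]
    field_simp
    ring
  · rw [hdc]
    simp only [Real.sign_zero, abs_zero, zero_mul, neg_zero, Real.exp_zero]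
    field_simp
    ring
  · rw [Real.sign_of_pos hdc, abs_of_pos hdc]
    field_simp
    ring
end

section
/- For every x > 0, every k ≥ 0, and all real v₁, v₂, one has ∫₀^∞ (4πτ)^{−3/2} · exp( −((x − v₁τ)² + (v₂τ)²)/(4τ) − k·τ ) dτ = (1/(4πx)) · exp( x·v₁/2 − (x/2)·√(v₁² + v₂² + 4k) ). -/
open Real MeasureTheory Set

-- f(s) = s - m/s on Ioi 0
private lemma derivA (m : ℝ) : ∀ s ∈ Ioi (0:ℝ),
    HasDerivWithinAt (fun s => s - m/s) (1 + m/s^2) (Ioi 0) s := by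
  intro s hs
  have hs0 : s ≠ 0 := (mem_Ioi.1 hs).ne'
  have h1 : HasDerivAt (fun s : ℝ => s - m/s) (1 - m * (-(s^2)⁻¹)) s := by
    simpa [div_eq_mul_inv] using (hasDerivAt_id s).fun_sub ((hasDerivAt_inv hs0).const_mul m)
  have h2 : 1 - m * (-(s^2)⁻¹) = 1 + m/s^2 := by field_simp; ring
  exact (h2 ▸ h1).hasDerivWithinAt

private lemma injA (m : ℝ) (hm : 0 < m) : InjOn (fun s => s - m/s) (Ioi (0:ℝ)) := by
  intro s hs t ht h
  have hs0 : s ≠ 0 := (mem_Ioi.1 hs).ne'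
  have ht0 : t ≠ 0 := (mem_Ioi.1 ht).ne'
  simp only at h
  have key : (s - t) * (s * t + m) = 0 := by
    field_simp at h
    nlinarith [h]
  have hpos : s * t + m > 0 := by
    have := mem_Ioi.1 hs; have := mem_Ioi.1 ht; positivity
  rcases mul_eq_zero.1 key with h' | h'
  · linarith
  · linarith

private lemma imgA (m : ℝ) (hm : 0 < m) : (fun s => s - m/s) '' Ioi (0:ℝ) = univ := by
  apply eq_univ_of_forall
  intro y
  refine ⟨(y + Real.sqrt (y^2 + 4*m))/2, ?_, ?_⟩
  · have h1 : |y| < Real.sqrt (y^2 + 4*m) := by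
      rw [← Real.sqrt_sq_eq_abs]
      exact Real.sqrt_lt_sqrt (sq_nonneg y) (by linarith)
    have := neg_abs_le y
    simp only [mem_Ioi]
    linarith [neg_lt_of_abs_lt h1]
  · have hsq : Real.sqrt (y^2 + 4*m) ^ 2 = y^2 + 4*m :=
      Real.sq_sqrt (by positivity)
    have hspos : (0:ℝ) < (y + Real.sqrt (y^2 + 4*m))/2 := by
      have h1 : |y| < Real.sqrt (y^2 + 4*m) := by
        rw [← Real.sqrt_sq_eq_abs]
        exact Real.sqrt_lt_sqrt (sq_nonneg y) (by linarith)
      linarith [neg_lt_of_abs_lt h1]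
    have hdiv : m / ((y + Real.sqrt (y^2 + 4*m))/2) = (Real.sqrt (y^2 + 4*m) - y)/2 := by
      rw [div_eq_iff hspos.ne']
      linear_combination (-(1:ℝ)/4) * hsq
    simp only
    rw [hdiv]; ring

private lemma lemA (m : ℝ) (hm : 0 < m) :
    ∫ s in Ioi (0:ℝ), (1 + m/s^2) * Real.exp (-(s - m/s)^2) = Real.sqrt π := by
  have key := integral_image_eq_integral_abs_deriv_smul (F := ℝ) measurableSet_Ioi
    (derivA m) (injA m hm) (fun u => Real.exp (-u^2))
  rw [imgA m hm] at key
  have hl : ∫ u in (univ : Set ℝ), Real.exp (-u^2) = Real.sqrt π := by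
    rw [Measure.restrict_univ]
    simpa using integral_gaussian 1
  rw [hl] at key
  rw [key]
  apply setIntegral_congr_fun measurableSet_Ioi
  intro s hs
  have hs' : (0:ℝ) < s := hs
  have : |1 + m/s^2| = 1 + m/s^2 := abs_of_pos (by positivity)
  simp [this, smul_eq_mul]

private lemma intA (m : ℝ) (hm : 0 < m) :
    IntegrableOn (fun s => (1 + m/s^2) * Real.exp (-(s - m/s)^2)) (Ioi (0:ℝ)) := by
  have key := (integrableOn_image_iff_integrableOn_abs_deriv_smul (F := ℝ) measurableSet_Ioi
    (derivA m) (injA m hm) (fun u => Real.exp (-u^2))).1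
  rw [imgA m hm] at key
  have h0 : IntegrableOn (fun u => Real.exp (-u^2)) (univ : Set ℝ) := by
    rw [integrableOn_univ]
    simpa using integrable_exp_neg_mul_sq (show (0:ℝ) < 1 by norm_num)
  have key2 := key h0
  apply key2.congr_fun ?_ measurableSet_Ioi
  intro s hs
  have hs' : (0:ℝ) < s := hs
  have : |1 + m/s^2| = 1 + m/s^2 := abs_of_pos (by positivity)
  simp [this, smul_eq_mul]

private lemma derivB (m : ℝ) : ∀ s ∈ Ioi (0:ℝ),
    HasDerivWithinAt (fun s => m/s) (-(m/s^2)) (Ioi 0) s := by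
  intro s hs
  have hs0 : s ≠ 0 := (mem_Ioi.1 hs).ne'
  have h1 : HasDerivAt (fun s : ℝ => m/s) (m * (-(s^2)⁻¹)) s := by
    simpa [div_eq_mul_inv] using (hasDerivAt_inv hs0).const_mul m
  have h2 : m * (-(s^2)⁻¹) = -(m/s^2) := by field_simp
  exact (h2 ▸ h1).hasDerivWithinAt

private lemma injB (m : ℝ) (hm : 0 < m) : InjOn (fun s => m/s) (Ioi (0:ℝ)) := by
  intro s hs t ht h
  have hs0 : s ≠ 0 := (mem_Ioi.1 hs).ne'
  have ht0 : t ≠ 0 := (mem_Ioi.1 ht).ne'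
  simp only at h
  field_simp at h
  exact h.symm

private lemma imgB (m : ℝ) (hm : 0 < m) : (fun s => m/s) '' Ioi (0:ℝ) = Ioi 0 := by
  ext y
  constructor
  · rintro ⟨s, hs, rfl⟩
    exact mem_Ioi.2 (div_pos hm (mem_Ioi.1 hs))
  · intro hy
    exact ⟨m/y, mem_Ioi.2 (div_pos hm (mem_Ioi.1 hy)), by
      field_simp⟩

private lemma lemB (m : ℝ) (hm : 0 < m) :
    ∫ s in Ioi (0:ℝ), Real.exp (-(s - m/s)^2)
      = ∫ s in Ioi (0:ℝ), (m/s^2) * Real.exp (-(s - m/s)^2) := by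
  have key := integral_image_eq_integral_abs_deriv_smul (F := ℝ) measurableSet_Ioi
    (derivB m) (injB m hm) (fun u => Real.exp (-(u - m/u)^2))
  rw [imgB m hm] at key
  rw [key]
  apply setIntegral_congr_fun measurableSet_Ioi
  intro s hs
  have hs' : (0:ℝ) < s := hs
  have h1 : |(-(m/s^2))| = m/s^2 := by
    rw [abs_neg]; exact abs_of_pos (by positivity)
  have h2 : m/(m/s) = s := by
    rw [div_div_eq_mul_div, mul_comm, mul_div_assoc, div_self hm.ne', mul_one]
  simp only [smul_eq_mul, h1, h2]
  rw [show (-(m/s - s)^2) = (-(s - m/s)^2) by ring]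

private lemma contOn_g (m : ℝ) :
    ContinuousOn (fun s => Real.exp (-(s - m/s)^2)) (Ioi (0:ℝ)) := by
  apply Real.continuous_exp.comp_continuousOn
  apply ContinuousOn.neg
  apply ContinuousOn.pow
  exact continuousOn_id.sub (continuousOn_const.div continuousOn_id
    (fun s hs => (mem_Ioi.1 hs).ne'))

private lemma F_eq (m : ℝ) (hm : 0 ≤ m) :
    ∫ s in Ioi (0:ℝ), Real.exp (-(s - m/s)^2) = Real.sqrt π / 2 := by
  rcases eq_or_lt_of_le hm with h0 | hm
  · simp only [← h0, zero_div, sub_zero]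
    simpa using integral_gaussian_Ioi 1
  · -- integrability of the two pieces
    have hmeas_g : AEStronglyMeasurable (fun s => Real.exp (-(s - m/s)^2))
        (volume.restrict (Ioi (0:ℝ))) :=
      (contOn_g m).aestronglyMeasurable measurableSet_Ioi
    have hmeas_h : AEStronglyMeasurable (fun s => (m/s^2) * Real.exp (-(s - m/s)^2))
        (volume.restrict (Ioi (0:ℝ))) := by
      apply ContinuousOn.aestronglyMeasurable ?_ measurableSet_Ioi
      exact (continuousOn_const.div (continuousOn_pow 2)
        (fun s hs => pow_ne_zero 2 (mem_Ioi.1 hs).ne')).mul (contOn_g m)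
    have hbound : ∀ᵐ s ∂(volume.restrict (Ioi (0:ℝ))),
        ‖Real.exp (-(s - m/s)^2)‖ ≤ ‖(1 + m/s^2) * Real.exp (-(s - m/s)^2)‖ := by
      filter_upwards [ae_restrict_mem measurableSet_Ioi] with s hs
      have hs' : (0:ℝ) < s := hs
      have h1 : (0:ℝ) < 1 + m/s^2 := by positivity
      rw [Real.norm_eq_abs, Real.norm_eq_abs, abs_of_pos (Real.exp_pos _),
        abs_of_pos (mul_pos h1 (Real.exp_pos _))]
      nlinarith [Real.exp_pos (-(s - m/s)^2), div_pos hm (pow_pos hs' 2)]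
    have hbound2 : ∀ᵐ s ∂(volume.restrict (Ioi (0:ℝ))),
        ‖(m/s^2) * Real.exp (-(s - m/s)^2)‖ ≤ ‖(1 + m/s^2) * Real.exp (-(s - m/s)^2)‖ := by
      filter_upwards [ae_restrict_mem measurableSet_Ioi] with s hs
      have hs' : (0:ℝ) < s := hs
      have h1 : (0:ℝ) < 1 + m/s^2 := by positivity
      have h2 : (0:ℝ) < m/s^2 := by positivity
      rw [Real.norm_eq_abs, Real.norm_eq_abs, abs_of_pos (mul_pos h2 (Real.exp_pos _)),
        abs_of_pos (mul_pos h1 (Real.exp_pos _))]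
      nlinarith [Real.exp_pos (-(s - m/s)^2)]
    have hg : IntegrableOn (fun s => Real.exp (-(s - m/s)^2)) (Ioi (0:ℝ)) :=
      Integrable.mono (intA m hm) hmeas_g hbound
    have hh : IntegrableOn (fun s => (m/s^2) * Real.exp (-(s - m/s)^2)) (Ioi (0:ℝ)) :=
      Integrable.mono (intA m hm) hmeas_h hbound2
    have hsplit : ∫ s in Ioi (0:ℝ), (1 + m/s^2) * Real.exp (-(s - m/s)^2)
        = (∫ s in Ioi (0:ℝ), Real.exp (-(s - m/s)^2))
          + ∫ s in Ioi (0:ℝ), (m/s^2) * Real.exp (-(s - m/s)^2) := by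
      rw [← integral_add hg hh]
      apply setIntegral_congr_fun measurableSet_Ioi
      intro s hs
      ring
    have := lemA m hm
    rw [hsplit, ← lemB m hm] at this
    linarith

private lemma rpow_neg_three_half {a : ℝ} (ha : 0 < a) :
    a ^ (-(3:ℝ)/2) = (a * Real.sqrt a)⁻¹ := by
  rw [show (-(3:ℝ)/2) = -((3:ℝ)/2) by ring, Real.rpow_neg ha.le]
  congr 1
  rw [show ((3:ℝ)/2) = 1 + 1/2 by ring, Real.rpow_add ha, Real.rpow_one,
    ← Real.sqrt_eq_rpow]

private lemma derivC (b : ℝ) (hb : 0 < b) : ∀ s ∈ Ioi (0:ℝ),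
    HasDerivWithinAt (fun s => b/s^2) (-(2*b/s^3)) (Ioi 0) s := by
  intro s hs
  have hs' : (0:ℝ) < s := hs
  have h1 : HasDerivAt (fun s : ℝ => b/s^2) (b * (-(2 * s^1) / (s^2)^2)) s := by
    simpa [div_eq_mul_inv] using ((hasDerivAt_pow 2 s).inv (pow_ne_zero 2 hs'.ne')).const_mul b
  have h2 : b * (-(2 * s^1) / (s^2)^2) = -(2*b/s^3) := by
    field_simp
  exact (h2 ▸ h1).hasDerivWithinAt

private lemma injC (b : ℝ) (hb : 0 < b) : InjOn (fun s => b/s^2) (Ioi (0:ℝ)) := by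
  intro s hs t ht h
  have hs' : (0:ℝ) < s := hs
  have ht' : (0:ℝ) < t := ht
  simp only at h
  field_simp at h
  exact (sq_eq_sq₀ hs'.le ht'.le).1 h.symm

private lemma imgC (b : ℝ) (hb : 0 < b) : (fun s => b/s^2) '' Ioi (0:ℝ) = Ioi 0 := by
  ext y
  constructor
  · rintro ⟨s, hs, rfl⟩
    exact mem_Ioi.2 (div_pos hb (pow_pos (mem_Ioi.1 hs) 2))
  · intro hy
    have hy' : (0:ℝ) < y := hy
    refine ⟨Real.sqrt (b/y), mem_Ioi.2 (Real.sqrt_pos.2 (div_pos hb hy')), ?_⟩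
    simp only
    rw [Real.sq_sqrt (div_pos hb hy').le, div_div_eq_mul_div, mul_comm, mul_div_assoc,
      div_self hb.ne', mul_one]

private lemma lemC (b c : ℝ) (hb : 0 < b) (hc : 0 ≤ c) :
    ∫ τ in Ioi (0:ℝ), τ ^ (-(3:ℝ)/2) * Real.exp (-b/τ - c*τ)
      = Real.sqrt (π/b) * Real.exp (-(2 * Real.sqrt (b*c))) := by
  set m := Real.sqrt (b*c) with hm
  have hm0 : 0 ≤ m := Real.sqrt_nonneg _
  have hm2 : m^2 = b*c := Real.sq_sqrt (by positivity)
  have hsb : (0:ℝ) < Real.sqrt b := Real.sqrt_pos.2 hb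
  have key := integral_image_eq_integral_abs_deriv_smul (F := ℝ) measurableSet_Ioi
    (derivC b hb) (injC b hb) (fun τ => τ ^ (-(3:ℝ)/2) * Real.exp (-b/τ - c*τ))
  rw [imgC b hb] at key
  rw [key]
  have hcong : ∀ s ∈ Ioi (0:ℝ),
      |(-(2*b/s^3))| • ((b/s^2) ^ (-(3:ℝ)/2) * Real.exp (-b/(b/s^2) - c*(b/s^2)))
        = (2 / Real.sqrt b * Real.exp (-(2*m))) * Real.exp (-(s - m/s)^2) := by
    intro s hs
    have hs' : (0:ℝ) < s := hs
    have hbs : (0:ℝ) < b/s^2 := div_pos hb (pow_pos hs' 2)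
    have habs : |(-(2*b/s^3))| = 2*b/s^3 := by
      rw [abs_neg]; exact abs_of_pos (by positivity)
    have hsq : Real.sqrt (b/s^2) = Real.sqrt b / s := by
      rw [Real.sqrt_div hb.le, Real.sqrt_sq hs'.le]
    have hpow : (b/s^2) ^ (-(3:ℝ)/2) = s^3 / (b * Real.sqrt b) := by
      rw [rpow_neg_three_half hbs, hsq, div_mul_div_comm, inv_div,
        show s^2*s = s^3 by ring]
    have hexp : Real.exp (-b/(b/s^2) - c*(b/s^2))
        = Real.exp (-(2*m)) * Real.exp (-(s - m/s)^2) := by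
      rw [← Real.exp_add]
      congr 1
      have h1 : b/(b/s^2) = s^2 := by
        field_simp
      rw [neg_div, h1]
      field_simp
      linear_combination hm2
    rw [smul_eq_mul, habs, hpow, hexp]
    field_simp
  rw [setIntegral_congr_fun measurableSet_Ioi hcong, integral_const_mul,
    F_eq m hm0]
  rw [Real.sqrt_div Real.pi_pos.le]
  ring

private lemma sqrt_four_pi : Real.sqrt (4*π) = 2 * Real.sqrt π := by
  rw [show (4:ℝ)*π = 2^2*π by ring, Real.sqrt_mul (by positivity), Real.sqrt_sq (by norm_num)]

/-- Asymptotic impact (per unit receiver volume, under the uniform concentration assumption)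
of a continuously-emitting noise source at distance `x`, with flow `(v₁, v₂)` and
degradation rate `k`. -/
theorem asymptotic_impact_uca_with_flow_and_degradation (x k : ℝ) (v₁ v₂ : ℝ)
    (hx : 0 < x) (hk : 0 ≤ k) :
    ∫ τ in Set.Ioi (0:ℝ),
      (4*π*τ) ^ (-(3:ℝ)/2)
        * Real.exp (-((x - v₁*τ)^2 + (v₂*τ)^2) / (4*τ) - k*τ)
    = (1/(4*π*x)) * Real.exp (x*v₁/2 - (x/2) * Real.sqrt (v₁^2 + v₂^2 + 4*k)) := by
  have hpi : (0:ℝ) < π := Real.pi_pos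
  set a := v₁^2 + v₂^2 + 4*k with ha
  have ha0 : (0:ℝ) ≤ a := by nlinarith [sq_nonneg v₁, sq_nonneg v₂]
  have hb : (0:ℝ) < x^2/4 := by positivity
  have hc : (0:ℝ) ≤ a/4 := by linarith
  have hcong : ∀ τ ∈ Ioi (0:ℝ),
      (4*π*τ) ^ (-(3:ℝ)/2) * Real.exp (-((x - v₁*τ)^2 + (v₂*τ)^2) / (4*τ) - k*τ)
        = ((4*π) ^ (-(3:ℝ)/2) * Real.exp (x*v₁/2))
            * (τ ^ (-(3:ℝ)/2) * Real.exp (-(x^2/4)/τ - (a/4)*τ)) := by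
    intro τ hτ
    have hτ' : (0:ℝ) < τ := hτ
    have h1 : (4*π*τ) ^ (-(3:ℝ)/2) = (4*π) ^ (-(3:ℝ)/2) * τ ^ (-(3:ℝ)/2) :=
      Real.mul_rpow (by positivity) hτ'.le
    have h2 : Real.exp (-((x - v₁*τ)^2 + (v₂*τ)^2) / (4*τ) - k*τ)
        = Real.exp (x*v₁/2) * Real.exp (-(x^2/4)/τ - (a/4)*τ) := by
      rw [← Real.exp_add]
      congr 1
      rw [ha]
      field_simp
      ring
    rw [h1, h2]
    ring
  rw [setIntegral_congr_fun measurableSet_Ioi hcong, integral_const_mul,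
    lemC (x^2/4) (a/4) hb hc]
  have h3 : Real.sqrt (π/(x^2/4)) = 2 * Real.sqrt π / x := by
    rw [show π/(x^2/4) = (2^2*π)/x^2 by ring, Real.sqrt_div (by positivity),
      Real.sqrt_sq hx.le, Real.sqrt_mul (by positivity), Real.sqrt_sq (by norm_num)]
  have h4 : Real.sqrt ((x^2/4)*(a/4)) = (x/4) * Real.sqrt a := by
    rw [show (x^2/4)*(a/4) = (x/4)^2 * a by ring, Real.sqrt_mul (sq_nonneg _),
      Real.sqrt_sq (by positivity)]
  have hsp : (0:ℝ) < Real.sqrt π := Real.sqrt_pos.2 hpi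
  rw [h3, h4, rpow_neg_three_half (by positivity), sqrt_four_pi,
    show x*v₁/2 - (x/2) * Real.sqrt a = x*v₁/2 + (-(2*((x/4) * Real.sqrt a))) by ring,
    Real.exp_add]
  field_simp
end

section
/- For every b ≥ 0 and every c > 0, one has ∫₀^∞ a^{−3/2} · exp(−b·a − c/a) da = √(π/c) · exp(−2√(b·c)). -/
open Real MeasureTheory
open Set


-- injectivity of x - s/x on Ioi 0
lemma aux_inj (s : ℝ) (hs : 0 < s) : InjOn (fun x : ℝ => x - s/x) (Ioi 0) := by
  intro x hx y hy h
  simp only [mem_Ioi] at hx hy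
  simp only at h
  have hx' := hx.ne'
  have hy' := hy.ne'
  field_simp at h
  nlinarith [mul_pos hx hy]

-- surjectivity
lemma aux_image (s : ℝ) (hs : 0 < s) : (fun x : ℝ => x - s/x) '' Ioi 0 = univ := by
  apply eq_univ_of_forall
  intro y
  have hr : 0 < Real.sqrt (y^2 + 4*s) := Real.sqrt_pos.2 (by nlinarith)
  have hr2 : (Real.sqrt (y^2 + 4*s))^2 = y^2 + 4*s := Real.sq_sqrt (by nlinarith)
  set r := Real.sqrt (y^2 + 4*s) with hrdef
  have hry : -y < r := by nlinarith [hr2, hs, hr, sq_nonneg (r+y)]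
  have hx : 0 < (y + r)/2 := by linarith
  refine ⟨(y + r)/2, hx, ?_⟩
  have hxne : (y + r)/2 ≠ 0 := hx.ne'
  have hd : s / ((y+r)/2) = (y+r)/2 - y := by
    rw [div_eq_iff hxne]; nlinarith [hr2]
  simp only [hd]; ring

lemma aux_inv_image (s : ℝ) (hs : 0 < s) : (fun x : ℝ => s/x) '' Ioi 0 = Ioi 0 := by
  ext y
  simp only [mem_image, mem_Ioi]
  constructor
  · rintro ⟨x, hx, rfl⟩; exact div_pos hs hx
  · intro hy; exact ⟨s/y, div_pos hs hy, by field_simp⟩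

lemma aux_cont (s : ℝ) : ContinuousOn (fun x : ℝ => Real.exp (-(x - s/x)^2)) (Ioi 0) := by
  apply Real.continuous_exp.comp_continuousOn
  apply ContinuousOn.neg
  apply ContinuousOn.pow
  exact continuousOn_id.sub (continuousOn_const.div continuousOn_id (fun x hx => ne_of_gt hx))

lemma aux_du (s x : ℝ) (hx : x ∈ Ioi (0:ℝ)) :
    HasDerivWithinAt (fun x : ℝ => x - s/x) (1 + s/x^2) (Ioi 0) x := by
  have hx0 : x ≠ 0 := ne_of_gt hx
  have h : HasDerivAt (fun x : ℝ => x - s/x) (1 - s * (-(x^2)⁻¹)) x := by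
    simpa [div_eq_mul_inv] using
      (hasDerivAt_id' x).fun_sub ((hasDerivAt_inv hx0).const_mul s)
  have := h.hasDerivWithinAt (s := Ioi 0)
  exact this.congr_deriv (by ring)

lemma aux_dinv (s x : ℝ) (hx : x ∈ Ioi (0:ℝ)) :
    HasDerivWithinAt (fun x : ℝ => s/x) (-(s/x^2)) (Ioi 0) x := by
  have hx0 : x ≠ 0 := ne_of_gt hx
  have h : HasDerivAt (fun x : ℝ => s/x) (s * (-(x^2)⁻¹)) x := by
    simpa [div_eq_mul_inv] using (hasDerivAt_inv hx0).const_mul s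
  have := h.hasDerivWithinAt (s := Ioi 0)
  exact this.congr_deriv (by ring)

lemma glasser_half (s : ℝ) (hs : 0 < s) :
    ∫ x in Ioi (0:ℝ), Real.exp (-(x - s/x)^2) = Real.sqrt π / 2 := by
  set g : ℝ → ℝ := fun u => Real.exp (-(u^2)) with hg
  have hIg : Integrable g := by
    simpa using integrable_exp_neg_mul_sq (one_pos : (0:ℝ) < 1)
  -- change of variables with u = x - s/x
  have h1 : ∫ u, g u = ∫ x in Ioi (0:ℝ), |1 + s/x^2| • g (x - s/x) := by
    rw [← setIntegral_univ, ← aux_image s hs]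
    exact integral_image_eq_integral_abs_deriv_smul measurableSet_Ioi
      (aux_du s) (aux_inj s hs) g
  have hIbig : IntegrableOn (fun x => |1 + s/x^2| • g (x - s/x)) (Ioi 0) := by
    rw [← integrableOn_image_iff_integrableOn_abs_deriv_smul measurableSet_Ioi
      (aux_du s) (aux_inj s hs) g, aux_image s hs]
    exact hIg.integrableOn
  -- pointwise simplification on Ioi 0
  have habs : ∀ x ∈ Ioi (0:ℝ), |1 + s/x^2| • g (x - s/x)
      = Real.exp (-(x - s/x)^2) + (s/x^2) * Real.exp (-(x - s/x)^2) := by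
    intro x hx
    have hx0 : (0:ℝ) < x := hx
    have h1' : (0:ℝ) ≤ s/x^2 := le_of_lt (div_pos hs (by positivity))
    rw [smul_eq_mul, abs_of_pos (by linarith)]
    simp only [hg]
    ring
  have hIbig' : IntegrableOn
      (fun x => Real.exp (-(x - s/x)^2) + (s/x^2) * Real.exp (-(x - s/x)^2)) (Ioi 0) :=
    hIbig.congr_fun habs measurableSet_Ioi
  have hIe : IntegrableOn (fun x => Real.exp (-(x - s/x)^2)) (Ioi 0) := by
    apply Integrable.mono hIbig' ((aux_cont s).aestronglyMeasurable measurableSet_Ioi)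
    filter_upwards [ae_restrict_mem measurableSet_Ioi] with x hx
    have hx0 : (0:ℝ) < x := hx
    have h1' : (0:ℝ) ≤ (s/x^2) * Real.exp (-(x - s/x)^2) := by positivity
    rw [Real.norm_eq_abs, Real.norm_eq_abs, abs_of_pos (Real.exp_pos _),
      abs_of_pos (by positivity)]
    linarith
  have hIsm : IntegrableOn (fun x => (s/x^2) * Real.exp (-(x - s/x)^2)) (Ioi 0) := by
    exact IntegrableOn.congr_fun (hIbig'.sub hIe)
      (fun x _ => by simp only [Pi.sub_apply]; ring) measurableSet_Ioi
  -- change of variables with x ↦ s/x : second piece equals the first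
  have h2 : ∫ x in Ioi (0:ℝ), Real.exp (-(x - s/x)^2)
      = ∫ x in Ioi (0:ℝ), (s/x^2) * Real.exp (-(x - s/x)^2) := by
    have := integral_image_eq_integral_abs_deriv_smul measurableSet_Ioi
      (aux_dinv s) ?inj (fun u => Real.exp (-(u - s/u)^2))
    case inj =>
      intro x hx y hy h
      simp only [mem_Ioi] at hx hy
      simp only [div_eq_div_iff (ne_of_gt hx) (ne_of_gt hy)] at h
      exact mul_left_cancel₀ (ne_of_gt hs) h.symm
    rw [aux_inv_image s hs] at this
    rw [this]
    apply setIntegral_congr_fun measurableSet_Ioi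
    intro x hx
    have hx0 : (0:ℝ) < x := hx
    have hsx : s / (s/x) = x := by field_simp
    simp only [smul_eq_mul, abs_neg, abs_of_pos (div_pos hs (by positivity) : 0 < s / x^2), hsx]
    congr 2
    ring
  -- combine
  have hsplit : ∫ u, g u = (∫ x in Ioi (0:ℝ), Real.exp (-(x - s/x)^2))
      + ∫ x in Ioi (0:ℝ), (s/x^2) * Real.exp (-(x - s/x)^2) := by
    rw [h1, setIntegral_congr_fun measurableSet_Ioi habs]
    exact integral_add hIe hIsm
  have hgauss : ∫ u, g u = Real.sqrt π := by
    have := integral_gaussian 1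
    simpa [hg] using this
  rw [hgauss, ← h2] at hsplit
  linarith

lemma glasser (s : ℝ) (hs : 0 < s) :
    ∫ x in Ioi (0:ℝ), Real.exp (-(x^2) - s^2/x^2)
    = Real.sqrt π / 2 * Real.exp (-(2*s)) := by
  have h : ∀ x ∈ Ioi (0:ℝ), Real.exp (-(x^2) - s^2/x^2)
      = Real.exp (-(2*s)) * Real.exp (-(x - s/x)^2) := by
    intro x hx
    have hx0 : x ≠ 0 := ne_of_gt hx
    rw [← Real.exp_add]
    congr 1
    field_simp
    ring
  rw [setIntegral_congr_fun measurableSet_Ioi h, integral_const_mul, glasser_half s hs]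
  ring

lemma sub_image (c : ℝ) (hc : 0 < c) : (fun x : ℝ => c/x^2) '' Ioi 0 = Ioi 0 := by
  ext y
  simp only [mem_image, mem_Ioi]
  constructor
  · rintro ⟨x, hx, rfl⟩; exact div_pos hc (by positivity)
  · intro hy
    refine ⟨Real.sqrt (c/y), Real.sqrt_pos.2 (div_pos hc hy), ?_⟩
    rw [sq_sqrt (le_of_lt (div_pos hc hy))]
    field_simp

lemma sub_inj (c : ℝ) (hc : 0 < c) : InjOn (fun x : ℝ => c/x^2) (Ioi 0) := by
  intro x hx y hy h
  simp only [mem_Ioi] at hx hy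
  simp only [div_eq_div_iff (by positivity : (x:ℝ)^2 ≠ 0) (by positivity : (y:ℝ)^2 ≠ 0)] at h
  have := mul_left_cancel₀ (ne_of_gt hc) h
  nlinarith

lemma sub_deriv (c : ℝ) (x : ℝ) (hx : x ∈ Ioi (0:ℝ)) :
    HasDerivWithinAt (fun x : ℝ => c/x^2) (-(2*c/x^3)) (Ioi 0) x := by
  have hx0 : x ≠ 0 := ne_of_gt hx
  have h : HasDerivAt (fun x : ℝ => c/x^2)
      ((0 * x^2 - c * (2 * x^1)) / (x^2)^2) x :=
    (hasDerivAt_const x c).div (hasDerivAt_pow 2 x) (pow_ne_zero 2 hx0)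
  have h2 := h.hasDerivWithinAt (s := Ioi 0)
  exact h2.congr_deriv (by field_simp; ring)

lemma sub1 (b c : ℝ) (hc : 0 < c) :
    ∫ a in Ioi (0:ℝ), a ^ (-(3:ℝ)/2) * Real.exp (-(b*a) - c/a)
    = (2 / Real.sqrt c) * ∫ x in Ioi (0:ℝ), Real.exp (-(x^2) - (b*c)/x^2) := by
  have key := integral_image_eq_integral_abs_deriv_smul measurableSet_Ioi
    (sub_deriv c) (sub_inj c hc)
    (fun a => a ^ (-(3:ℝ)/2) * Real.exp (-(b*a) - c/a))
  rw [sub_image c hc] at key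
  rw [key, ← integral_const_mul]
  apply setIntegral_congr_fun measurableSet_Ioi
  intro x hx
  have hx0 : (0:ℝ) < x := hx
  have hxne : x ≠ 0 := ne_of_gt hx0
  simp only [smul_eq_mul]
  have habs : |(-(2*c/x^3))| = 2*c/x^3 := by
    rw [abs_neg, abs_of_pos (by positivity)]
  have hrpow : (c/x^2) ^ (-(3:ℝ)/2) = x^3 / (c * Real.sqrt c) := by
    rw [show (-(3:ℝ)/2) = -((3:ℝ)/2) by norm_num,
      Real.rpow_neg (le_of_lt (div_pos hc (by positivity))),
      Real.div_rpow hc.le (by positivity)]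
    have h1 : c ^ ((3:ℝ)/2) = c * Real.sqrt c := by
      rw [show (3:ℝ)/2 = 1 + 1/2 by norm_num, Real.rpow_add hc, Real.rpow_one,
        ← Real.sqrt_eq_rpow]
    have h2 : (x^2 : ℝ) ^ ((3:ℝ)/2) = x^3 := by
      rw [← Real.rpow_natCast x 2, ← Real.rpow_mul hx0.le]
      norm_num
    rw [h1, h2]
    rw [inv_div]
  have harg : -(b*(c/x^2)) - c/(c/x^2) = -(x^2) - (b*c)/x^2 := by
    field_simp
    ring
  rw [habs, hrpow, harg]
  have hsc : Real.sqrt c ≠ 0 := ne_of_gt (Real.sqrt_pos.2 hc)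
  field_simp

/-- `∫₀^∞ a^{−3/2} exp(−ba − c/a) da = √(π/c) exp(−2√(bc))` for `b ≥ 0`, `c > 0`. -/
theorem integral_rpow_neg_three_halves_exp (b c : ℝ) (hb : 0 ≤ b) (hc : 0 < c) :
    ∫ a in Set.Ioi (0:ℝ), a ^ (-(3:ℝ)/2) * Real.exp (-(b*a) - c/a)
    = Real.sqrt (π/c) * Real.exp (-(2 * Real.sqrt (b*c))) := by
  rw [sub1 b c hc]
  have hsc : (0:ℝ) < Real.sqrt c := Real.sqrt_pos.2 hc
  have hdiv : Real.sqrt (π/c) = Real.sqrt π / Real.sqrt c := Real.sqrt_div pi_pos.le c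
  rcases eq_or_lt_of_le hb with hb0 | hbpos
  · subst hb0
    have : ∫ x in Ioi (0:ℝ), Real.exp (-(x^2) - (0*c)/x^2)
        = ∫ x in Ioi (0:ℝ), Real.exp (-1 * x^2) := by
      apply setIntegral_congr_fun measurableSet_Ioi
      intro x hx
      norm_num
    rw [this, integral_gaussian_Ioi]
    simp [hdiv]
  · have hbc : 0 < b * c := mul_pos hbpos hc
    have hs : 0 < Real.sqrt (b*c) := Real.sqrt_pos.2 hbc
    have hs2 : Real.sqrt (b*c) ^ 2 = b * c := Real.sq_sqrt hbc.le
    rw [show b*c = Real.sqrt (b*c)^2 from hs2.symm, glasser _ hs, hs2, hdiv]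
    ring
end
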